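/- Let F be a standard Borel space. Then the sequential extension function ext : 𝔻 × F → 𝔻 defined by ext(S, x) = insert x S (i.e. S ∪ {x}) is measurable, where 𝔻 × F carries the product of the instance-space σ-algebra and the Borel σ-algebra of F. -/

import Mathlib

open MeasureTheory

/-- The canonical embedding of a database instance (a finite set of facts)
into the space of measures: `S ↦ ∑_{x ∈ S} δ_x`. -/
noncomputable def iota {F : Type*} [MeasurableSpace F] (S : Finset F) : Measure F :=
  ∑ x ∈ S, Measure.dirac x

/-- The instance space `𝔻`: `Finset F` equipped with the σ-algebra comapped along `ι`
from the canonical σ-algebra on `Measure F`. -/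
noncomputable instance instanceSpace (F : Type*) [MeasurableSpace F] : MeasurableSpace (Finset F) :=
  MeasurableSpace.comap iota inferInstance

section Aux

variable {F : Type*} [MeasurableSpace F]

open scoped ENNReal

lemma measurable_iota : Measurable (iota : Finset F → Measure F) :=
  fun t ht => ⟨t, ht, rfl⟩

lemma measurable_iota_apply {A : Set F} (hA : MeasurableSet A) :
    Measurable fun S : Finset F => iota S A :=
  (Measure.measurable_coe hA).comp measurable_iota

lemma iota_apply (S : Finset F) (A : Set F) :
    iota S A = ∑ y ∈ S, Measure.dirac y A := by
  simp [iota]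

lemma iota_singleton [MeasurableSingletonClass F] [DecidableEq F] (S : Finset F) (x : F) :
    iota S {x} = if x ∈ S then 1 else 0 := by
  rw [iota_apply]
  have : ∀ y ∈ S, Measure.dirac y ({x} : Set F) = if y = x then 1 else 0 := by
    intro y _
    rw [Measure.dirac_apply]
    by_cases h : y = x <;> simp [Set.indicator, h]
  rw [Finset.sum_congr rfl this, Finset.sum_ite_eq' S x (fun _ => 1)]

lemma iota_card (S : Finset F) : iota S Set.univ = S.card := by
  rw [iota_apply]
  simp

lemma measurableSet_card_eq (n : ℕ) : MeasurableSet {S : Finset F | S.card = n} := by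
  have : {S : Finset F | S.card = n} = (fun S : Finset F => iota S Set.univ) ⁻¹' {(n : ℝ≥0∞)} := by
    ext S
    simp only [Set.mem_setOf_eq, Set.mem_preimage, Set.mem_singleton_iff, iota_card]
    exact ⟨fun h => by rw [h], fun h => Nat.cast_injective h⟩
  rw [this]
  exact measurable_iota_apply MeasurableSet.univ (measurableSet_singleton _)

/-- The kernel `(S, x) ↦ ι S`. -/
noncomputable def iotaKernel (F : Type*) [MeasurableSpace F] :
    ProbabilityTheory.Kernel (Finset F × F) F :=
  ⟨fun p => iota p.1, measurable_iota.comp measurable_fst⟩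

/-- The truncation of `iotaKernel` to instances of cardinality `n`. -/
noncomputable def iotaKernelN (F : Type*) [MeasurableSpace F] (n : ℕ) :
    ProbabilityTheory.Kernel (Finset F × F) F :=
  ⟨fun p => if p.1.card = n then iota p.1 else 0, by
    refine Measurable.ite ?_ (measurable_iota.comp measurable_fst) measurable_const
    exact (measurableSet_card_eq n).preimage measurable_fst⟩

instance (n : ℕ) : ProbabilityTheory.IsFiniteKernel (iotaKernelN F n) := by
  refine ⟨⟨n, ENNReal.natCast_lt_top n, fun p => ?_⟩⟩
  show (if p.1.card = n then iota p.1 else 0) Set.univ ≤ (n : ℝ≥0∞)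
  split_ifs with h
  · rw [iota_card, h]
  · simp

instance : ProbabilityTheory.IsSFiniteKernel (iotaKernel F) := by
  refine ⟨iotaKernelN F, inferInstance, ?_⟩
  ext p A hA
  rw [ProbabilityTheory.Kernel.sum_apply' _ _ hA]
  show iota p.1 A = ∑' n, (if p.1.card = n then iota p.1 else 0) A
  rw [tsum_eq_single p.1.card]
  · simp
  · intro n hn
    rw [if_neg (Ne.symm hn)]
    rfl

lemma measurable_iota_singleton_eval [StandardBorelSpace F] :
    Measurable fun p : Finset F × F => iota p.1 {p.2} := by
  letI := upgradeStandardBorel F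
  have hdiag : MeasurableSet {q : (Finset F × F) × F | q.1.2 = q.2} := by
    have : {q : (Finset F × F) × F | q.1.2 = q.2}
        = (fun q : (Finset F × F) × F => (q.1.2, q.2)) ⁻¹' Set.diagonal F := by
      ext q; simp [Set.diagonal]
    rw [this]
    exact (IsClosed.measurableSet isClosed_diagonal).preimage
      ((measurable_snd.comp measurable_fst).prodMk measurable_snd)
  have h := ProbabilityTheory.Kernel.measurable_kernel_prodMk_left
    (κ := iotaKernel F) hdiag
  convert h using 2 with p
  have : (Prod.mk p ⁻¹' {q : (Finset F × F) × F | q.1.2 = q.2}) = {p.2} := by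
    ext y; simp [eq_comm]
  rw [this]
  rfl

lemma iota_insert_apply [MeasurableSingletonClass F] [DecidableEq F] (S : Finset F) (x : F)
    (A : Set F) :
    iota (insert x S) A = iota S A + A.indicator 1 x * (1 - iota S {x}) := by
  by_cases hx : x ∈ S
  · rw [Finset.insert_eq_self.mpr hx, iota_singleton]
    simp [hx]
  · have h0 : iota S {x} = 0 := by rw [iota_singleton]; simp [hx]
    rw [h0, tsub_zero, mul_one]
    rw [show iota (insert x S) = Measure.dirac x + iota S from by
      rw [iota, iota, Finset.sum_insert hx]]
    rw [Measure.add_apply, Measure.dirac_apply, add_comm]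

end Aux

/-- The sequential extension function `ext (S, x) = S ∪ {x} = insert x S` is measurable
with respect to the product of the instance-space σ-algebra and the Borel σ-algebra of
the standard Borel space `F`. -/
theorem measurable_ext (F : Type*) [MeasurableSpace F] [StandardBorelSpace F]
    [DecidableEq F] :
    Measurable (fun p : Finset F × F => insert p.2 p.1) := by
  have key : Measurable fun p : Finset F × F => iota (insert p.2 p.1) := by
    refine Measure.measurable_of_measurable_coe _ fun A hA => ?_
    have : (fun p : Finset F × F => iota (insert p.2 p.1) A)
        = fun p : Finset F × F =>
          iota p.1 A + A.indicator 1 p.2 * (1 - iota p.1 {p.2}) := by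
      funext p
      exact iota_insert_apply p.1 p.2 A
    rw [this]
    refine ((measurable_iota_apply hA).comp measurable_fst).add (Measurable.mul ?_ ?_)
    · exact ((measurable_one.indicator hA).comp measurable_snd)
    · exact Measurable.const_sub measurable_iota_singleton_eval 1
  intro t ht
  obtain ⟨u, hu, rfl⟩ := ht
  exact key hu
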